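/- Consider the model that outputs the complete graph on n nodes with probability p and the empty graph with probability 1−p (0 < p ≤ 1). Its overlap equals p and its expected triangle count equals C(n,3)·p; hence the fully dependent triangle bound (1/2)n³·Ov is tight up to constant factors. -/

import Mathlib

lemma fin_sum_ite_lt (n : ℕ) (j : Fin n) (c : ℝ) :
    ∑ i : Fin n, (if i < j then c else 0) = ((j : ℕ) : ℝ) * c := by
  rw [← Finset.sum_filter]
  have : Finset.univ.filter (fun i : Fin n => i < j) = Finset.Iio j := by ext i; simp
  rw [this, Finset.sum_const, Fin.card_Iio, nsmul_eq_mul]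

lemma count_pairs (n : ℕ) (c : ℝ) :
    ∑ i : Fin n, ∑ j : Fin n, (if i < j then c else 0) = (n.choose 2 : ℝ) * c := by
  rw [Finset.sum_comm]
  simp_rw [fin_sum_ite_lt, ← Finset.sum_mul]
  have hnat : ∑ x : Fin n, (x : ℕ) = n.choose 2 := by
    rw [show (∑ x : Fin n, (x : ℕ)) = ∑ m ∈ Finset.range n, m from
      Fin.sum_univ_eq_sum_range (fun m => m) n, Finset.sum_range_id, Nat.choose_two_right]
  rw [← hnat]; push_cast; ring

lemma sum_range_choose_two (n : ℕ) : ∑ m ∈ Finset.range n, m.choose 2 = n.choose 3 := by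
  induction n with
  | zero => simp
  | succ n ih => rw [Finset.sum_range_succ, ih, Nat.choose_succ_succ n 2, Nat.add_comm]

lemma count_triples (n : ℕ) (c : ℝ) :
    ∑ i : Fin n, ∑ j : Fin n, ∑ k : Fin n, (if i < j ∧ j < k then c else 0)
      = (n.choose 3 : ℝ) * c := by
  have h : ∀ k : Fin n, ∑ i : Fin n, ∑ j : Fin n, (if i < j ∧ j < k then c else 0)
      = (((k : ℕ).choose 2 : ℕ) : ℝ) * c := by
    intro k
    have hIio : ∑ j ∈ Finset.Iio k, ((j : ℕ) : ℝ) = (((k : ℕ).choose 2 : ℕ) : ℝ) := by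
      have hnat : ∑ j ∈ Finset.Iio k, (j : ℕ) = (k : ℕ).choose 2 := by
        calc ∑ j ∈ Finset.Iio k, (j : ℕ)
            = ∑ m ∈ (Finset.Iio k).map Fin.valEmbedding, m := by rw [Finset.sum_map]; rfl
          _ = ∑ m ∈ Finset.range (k : ℕ), m := by
              rw [Fin.map_valEmbedding_Iio, Nat.Iio_eq_range]
          _ = (k : ℕ).choose 2 := by rw [Finset.sum_range_id, Nat.choose_two_right]
      rw [← hnat]; push_cast; ring
    calc ∑ i : Fin n, ∑ j : Fin n, (if i < j ∧ j < k then c else 0)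
        = ∑ i : Fin n, ∑ j : Fin n, (if j < k then (if i < j then c else 0) else 0) := by
          apply Finset.sum_congr rfl; intro i _; apply Finset.sum_congr rfl; intro j _
          by_cases h1 : i < j <;> by_cases h2 : j < k <;> simp [h1, h2]
      _ = ∑ j : Fin n, (if j < k then ∑ i : Fin n, (if i < j then c else 0) else 0) := by
          rw [Finset.sum_comm]
          apply Finset.sum_congr rfl; intro j _
          split <;> simp
      _ = ∑ j : Fin n, (if j < k then ((j : ℕ) : ℝ) * c else 0) := by
          apply Finset.sum_congr rfl; intro j _
          split
          · exact fin_sum_ite_lt n j c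
          · rfl
      _ = (∑ j ∈ Finset.Iio k, ((j : ℕ) : ℝ)) * c := by
          rw [← Finset.sum_filter]
          have : Finset.univ.filter (fun j : Fin n => j < k) = Finset.Iio k := by ext; simp
          rw [this, Finset.sum_mul]
      _ = (((k : ℕ).choose 2 : ℕ) : ℝ) * c := by rw [hIio]
  have hswap : ∑ i : Fin n, ∑ j : Fin n, ∑ k : Fin n, (if i < j ∧ j < k then c else 0)
      = ∑ k : Fin n, ∑ i : Fin n, ∑ j : Fin n, (if i < j ∧ j < k then c else 0) := by
    calc ∑ i : Fin n, ∑ j : Fin n, ∑ k : Fin n, (if i < j ∧ j < k then c else 0)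
        = ∑ i : Fin n, ∑ k : Fin n, ∑ j : Fin n, (if i < j ∧ j < k then c else 0) :=
          Finset.sum_congr rfl (fun i _ => Finset.sum_comm)
      _ = ∑ k : Fin n, ∑ i : Fin n, ∑ j : Fin n, (if i < j ∧ j < k then c else 0) :=
          Finset.sum_comm
  rw [hswap]
  simp_rw [h, ← Finset.sum_mul]
  have hnat : ∑ k : Fin n, (k : ℕ).choose 2 = n.choose 3 := by
    rw [show (∑ k : Fin n, (k : ℕ).choose 2) = ∑ m ∈ Finset.range n, m.choose 2 from
      Fin.sum_univ_eq_sum_range (fun m => m.choose 2) n, sum_range_choose_two]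
  rw [← hnat]; push_cast; ring

open MeasureTheory Classical in

theorem complete_or_empty_overlap_and_triangles
    {Ω : Type*} [MeasurableSpace Ω] (μ : Measure Ω) [IsProbabilityMeasure μ]
    (n : ℕ) (hn : 2 ≤ n) (p : ℝ) (hp : 0 < p) (hp1 : p ≤ 1)
    (s : Set Ω) (hs : MeasurableSet s) (hμs : μ s = ENNReal.ofReal p)
    (A : Ω → Fin n → Fin n → ℝ)
    (hA : ∀ ω i j, A ω i j = if i ≠ j ∧ ω ∈ s then 1 else 0) :
    (∑ i : Fin n, ∑ j : Fin n,
          if i < j then ∫ q : Ω × Ω, A q.1 i j * A q.2 i j ∂(μ.prod μ) else 0) /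
        (∑ i : Fin n, ∑ j : Fin n, if i < j then ∫ ω, A ω i j ∂μ else 0) = p ∧
    (∫ ω, ∑ i : Fin n, ∑ j : Fin n, ∑ k : Fin n,
        (if i < j ∧ j < k then A ω i j * A ω j k * A ω i k else 0) ∂μ) =
      (n.choose 3 : ℝ) * p := by
  have hps : (μ s).toReal = p := by rw [hμs, ENNReal.toReal_ofReal hp.le]
  have hind : ∫ ω, (if ω ∈ s then (1:ℝ) else 0) ∂μ = p := by
    have heq : (fun ω => if ω ∈ s then (1:ℝ) else 0) = s.indicator (fun _ => 1) := by
      funext ω; simp [Set.indicator_apply]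
    rw [heq, MeasureTheory.integral_indicator_const (1:ℝ) hs, smul_eq_mul, mul_one, MeasureTheory.measureReal_def, hps]
  have hAeq : ∀ (ω : Ω) (i j : Fin n), i ≠ j → A ω i j = if ω ∈ s then (1:ℝ) else 0 := by
    intro ω i j hij; rw [hA]; simp [hij]
  have h1 : ∀ i j : Fin n, i < j → ∫ ω, A ω i j ∂μ = p := by
    intro i j hij
    rw [show (fun ω => A ω i j) = fun ω => if ω ∈ s then (1:ℝ) else 0 from
      funext fun ω => hAeq ω i j hij.ne]
    exact hind
  have h2 : ∀ i j : Fin n, i < j →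
      ∫ q : Ω × Ω, A q.1 i j * A q.2 i j ∂(μ.prod μ) = p * p := by
    intro i j hij
    have : (fun q : Ω × Ω => A q.1 i j * A q.2 i j)
        = fun q : Ω × Ω => (if q.1 ∈ s then (1:ℝ) else 0) * (if q.2 ∈ s then (1:ℝ) else 0) := by
      funext q; rw [hAeq q.1 i j hij.ne, hAeq q.2 i j hij.ne]
    rw [this, MeasureTheory.integral_prod_mul (fun ω => if ω ∈ s then (1:ℝ) else 0)
      (fun ω => if ω ∈ s then (1:ℝ) else 0), hind]
  constructor
  · have hnum : (∑ i : Fin n, ∑ j : Fin n,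
        if i < j then ∫ q : Ω × Ω, A q.1 i j * A q.2 i j ∂(μ.prod μ) else 0)
        = (n.choose 2 : ℝ) * (p * p) := by
      rw [← count_pairs n (p * p)]
      apply Finset.sum_congr rfl; intro i _; apply Finset.sum_congr rfl; intro j _
      split
      · next hij => exact h2 i j hij
      · rfl
    have hden : (∑ i : Fin n, ∑ j : Fin n, if i < j then ∫ ω, A ω i j ∂μ else 0)
        = (n.choose 2 : ℝ) * p := by
      rw [← count_pairs n p]
      apply Finset.sum_congr rfl; intro i _; apply Finset.sum_congr rfl; intro j _
      split
      · next hij => exact h1 i j hij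
      · rfl
    rw [hnum, hden]
    have hc : (n.choose 2 : ℝ) ≠ 0 := by
      exact_mod_cast (Nat.choose_pos hn).ne'
    field_simp
  · have hpt : ∀ ω, (∑ i : Fin n, ∑ j : Fin n, ∑ k : Fin n,
        (if i < j ∧ j < k then A ω i j * A ω j k * A ω i k else 0))
        = (n.choose 3 : ℝ) * (if ω ∈ s then (1:ℝ) else 0) := by
      intro ω
      rw [← count_triples n (if ω ∈ s then (1:ℝ) else 0)]
      apply Finset.sum_congr rfl; intro i _; apply Finset.sum_congr rfl; intro j _
      apply Finset.sum_congr rfl; intro k _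
      split
      · next hijk =>
          obtain ⟨hij, hjk⟩ := hijk
          rw [hAeq ω i j hij.ne, hAeq ω j k hjk.ne, hAeq ω i k (hij.trans hjk).ne]
          by_cases hω : ω ∈ s <;> simp [hω]
      · rfl
    simp_rw [hpt]
    rw [MeasureTheory.integral_const_mul, hind]
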